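/- Let f(ζ) = (15/16) ∑_{k≥1} k/((k²-1/4)(k²-9/4)) · (-ζ)^k, which converges for |ζ| ≤ 1. Then lim_{u → 0+} (f(-1+u) + 5/8)/(u² · log u) = -15/32, where the limit is along real u in (0,1). -/

import Mathlib

open Real Filter Set Topology

noncomputable def stmt7f (ζ : ℝ) : ℝ :=
  (15 / 16) * ∑' k : ℕ,
    (k : ℝ) / (((k : ℝ) ^ 2 - 1 / 4) * ((k : ℝ) ^ 2 - 9 / 4)) * (-ζ) ^ k

lemma oddSeries {s : ℝ} (h : |s| < 1) :
    HasSum (fun k : ℕ => s ^ (2 * k + 1) / (2 * (k : ℝ) + 1))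
      ((Real.log (1 + s) - Real.log (1 - s)) / 2) := by
  have := (Real.hasSum_log_sub_log_of_abs_lt_one h).div_const 2
  convert this using 2 with k
  · rfl
  ring

section
variable {s : ℝ}

lemma habs : 0 < s → s < 1 → |s| < 1 := fun h0 h1 => abs_lt.2 ⟨by linarith, h1⟩

lemma sumA (hs0 : 0 < s) (hs1 : s < 1) :
    HasSum (fun k : ℕ => (s ^ 2) ^ k / ((k : ℝ) + 1 / 2))
      (2 / s * ((Real.log (1 + s) - Real.log (1 - s)) / 2)) := by
  have O := (oddSeries (habs hs0 hs1)).mul_left (2 / s)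
  convert O using 1
  · rfl
  funext k
  have hk : (2 * (k : ℝ) + 1) ≠ 0 := by positivity
  have hk2 : ((k : ℝ) + 1 / 2) ≠ 0 := by positivity
  rw [← pow_mul]
  field_simp
  ring

lemma sumB (hs0 : 0 < s) (hs1 : s < 1) :
    HasSum (fun k : ℕ => (s ^ 2) ^ k / ((k : ℝ) - 1 / 2))
      (2 * s * ((Real.log (1 + s) - Real.log (1 - s)) / 2) - 2) := by
  have O := (oddSeries (habs hs0 hs1)).mul_left (2 * s)
  apply (hasSum_nat_add_iff' 1).mp
  have hfe : (fun n : ℕ => (s ^ 2) ^ (n + 1) / (((n + 1 : ℕ) : ℝ) - 1 / 2))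
      = fun k : ℕ => 2 * s * (s ^ (2 * k + 1) / (2 * (k : ℝ) + 1)) := by
    funext k
    have hk : (2 * (k : ℝ) + 1) ≠ 0 := by positivity
    have hk2 : (((k : ℕ) : ℝ) + 1 - 1 / 2) ≠ 0 := by
      have : (((k : ℕ) : ℝ) + 1 - 1 / 2) = (k : ℝ) + 1 / 2 := by ring
      rw [this]; positivity
    have hk' : ((1 : ℝ) + (k : ℝ) * 2) ≠ 0 := by positivity
    push_cast
    rw [← pow_mul, ← mul_div_assoc, div_eq_div_iff hk2 hk]
    ring
  rw [hfe]
  convert O using 1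
  · rfl
  norm_num

lemma sumC (hs0 : 0 < s) (hs1 : s < 1) :
    HasSum (fun k : ℕ => (s ^ 2) ^ k / ((k : ℝ) + 3 / 2))
      (2 / s ^ 3 * ((Real.log (1 + s) - Real.log (1 - s)) / 2 - s)) := by
  have O := ((hasSum_nat_add_iff' (f := fun k : ℕ => s ^ (2 * k + 1) / (2 * (k : ℝ) + 1)) 1).mpr
      (oddSeries (habs hs0 hs1))).mul_left (2 / s ^ 3)
  convert O using 1
  · rfl
  · funext k
    have hk : (2 * ((k : ℝ) + 1) + 1) ≠ 0 := by positivity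
    have hk2 : ((k : ℝ) + 3 / 2) ≠ 0 := by positivity
    push_cast
    rw [← pow_mul]
    field_simp
    ring
  · norm_num

lemma sumD (hs0 : 0 < s) (hs1 : s < 1) :
    HasSum (fun k : ℕ => (s ^ 2) ^ k / ((k : ℝ) - 3 / 2))
      (2 * s ^ 3 * ((Real.log (1 + s) - Real.log (1 - s)) / 2) - 2 / 3 - 2 * s ^ 2) := by
  have O := (oddSeries (habs hs0 hs1)).mul_left (2 * s ^ 3)
  apply (hasSum_nat_add_iff' 2).mp
  have hfe : (fun n : ℕ => (s ^ 2) ^ (n + 2) / (((n + 2 : ℕ) : ℝ) - 3 / 2))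
      = fun k : ℕ => 2 * s ^ 3 * (s ^ (2 * k + 1) / (2 * (k : ℝ) + 1)) := by
    funext k
    have hk : (2 * (k : ℝ) + 1) ≠ 0 := by positivity
    have hk2 : (((k : ℕ) : ℝ) + 2 - 3 / 2) ≠ 0 := by
      have : (((k : ℕ) : ℝ) + 2 - 3 / 2) = (k : ℝ) + 1 / 2 := by ring
      rw [this]; positivity
    have hk' : ((1 : ℝ) + (k : ℝ) * 2) ≠ 0 := by positivity
    push_cast
    rw [← pow_mul, ← mul_div_assoc, div_eq_div_iff hk2 hk]
    ring
  rw [hfe]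
  convert O using 1
  · rfl
  rw [Finset.sum_range_succ, Finset.sum_range_one]
  norm_num
  ring
end

lemma hne1 (k : ℕ) : ((k : ℕ) : ℝ) - 1 / 2 ≠ 0 := by
  intro h
  have h2 : ((2 * k : ℕ) : ℝ) = ((1 : ℕ) : ℝ) := by push_cast; linarith
  have := Nat.cast_inj (R := ℝ).mp h2
  omega

lemma hne3 (k : ℕ) : ((k : ℕ) : ℝ) - 3 / 2 ≠ 0 := by
  intro h
  have h2 : ((2 * k : ℕ) : ℝ) = ((3 : ℕ) : ℝ) := by push_cast; linarith
  have := Nat.cast_inj (R := ℝ).mp h2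
  omega

lemma mainSum {s : ℝ} (hs0 : 0 < s) (hs1 : s < 1) :
    HasSum (fun k : ℕ => (k : ℝ) / (((k : ℝ) ^ 2 - 1 / 4) * ((k : ℝ) ^ 2 - 9 / 4)) * (s ^ 2) ^ k)
      ((1 / 4) * ((2 * s ^ 3 * ((Real.log (1 + s) - Real.log (1 - s)) / 2) - 2 / 3 - 2 * s ^ 2)
        + 2 / s ^ 3 * ((Real.log (1 + s) - Real.log (1 - s)) / 2 - s)
        - (2 * s * ((Real.log (1 + s) - Real.log (1 - s)) / 2) - 2)
        - 2 / s * ((Real.log (1 + s) - Real.log (1 - s)) / 2))) := by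
  have H := ((((sumD hs0 hs1).add (sumC hs0 hs1)).sub (sumB hs0 hs1)).sub
      (sumA hs0 hs1)).mul_left (1 / 4)
  convert H using 1
  · rfl
  funext k
  have hd1 := hne1 k
  have hd3 := hne3 k
  have hd2 : ((k : ℕ) : ℝ) + 1 / 2 ≠ 0 := by positivity
  have hd4 : ((k : ℕ) : ℝ) + 3 / 2 ≠ 0 := by positivity
  have key : (k:ℝ)/((((k:ℝ) - 1/2) * ((k:ℝ) + 1/2)) * (((k:ℝ) - 3/2) * ((k:ℝ) + 3/2)))
      = (1/4)*(1/((k:ℝ)-3/2)+1/((k:ℝ)+3/2)-1/((k:ℝ)-1/2)-1/((k:ℝ)+1/2)) := by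
    rw [div_add_div _ _ hd3 hd4, div_sub_div _ _ (mul_ne_zero hd3 hd4) hd1,
      div_sub_div _ _ (mul_ne_zero (mul_ne_zero hd3 hd4) hd1) hd2, mul_div_assoc',
      div_eq_div_iff (by exact mul_ne_zero (mul_ne_zero hd1 hd2) (mul_ne_zero hd3 hd4))
        (mul_ne_zero (mul_ne_zero (mul_ne_zero hd3 hd4) hd1) hd2)]
    ring
  rw [show ((k : ℝ) ^ 2 - 1 / 4) = ((k : ℝ) - 1 / 2) * ((k : ℝ) + 1 / 2) by ring,
    show ((k : ℝ) ^ 2 - 9 / 4) = ((k : ℝ) - 3 / 2) * ((k : ℝ) + 3 / 2) by ring, key]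
  ring

lemma pointwise_eq {u : ℝ} (hu : u ∈ Set.Ioo (0:ℝ) 1) :
    (stmt7f (-1 + u) + 5 / 8) / (u ^ 2 * Real.log u)
      = (15/32) * ((Real.log (1 + Real.sqrt (1-u)) * (2-u) / (Real.sqrt (1-u))^3 - 1/(1-u))
          * (Real.log u)⁻¹ - (2-u) / (2 * (Real.sqrt (1-u))^3)) := by
  obtain ⟨hu0, hu1⟩ := hu
  have h1u : (0:ℝ) < 1 - u := by linarith
  set s := Real.sqrt (1-u) with hsdef
  have hsq : s ^ 2 = 1 - u := Real.sq_sqrt h1u.le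
  have hs0 : 0 < s := Real.sqrt_pos.mpr h1u
  have hs1 : s < 1 := by nlinarith [hsq, hs0]
  have H := mainSum hs0 hs1
  have hxx : -(-1 + u) = s ^ 2 := by rw [hsq]; ring
  have h7 : stmt7f (-1 + u) = 15 / 16 *
      ((1 / 4) * ((2 * s ^ 3 * ((Real.log (1 + s) - Real.log (1 - s)) / 2) - 2 / 3 - 2 * s ^ 2)
        + 2 / s ^ 3 * ((Real.log (1 + s) - Real.log (1 - s)) / 2 - s)
        - (2 * s * ((Real.log (1 + s) - Real.log (1 - s)) / 2) - 2)
        - 2 / s * ((Real.log (1 + s) - Real.log (1 - s)) / 2))) := by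
    simp only [stmt7f, hxx]
    rw [H.tsum_eq]
  rw [h7]
  have hlog : Real.log (1 - s) = Real.log u - Real.log (1 + s) := by
    have hmul : (1 - s) * (1 + s) = u := by nlinarith [hsq]
    have := Real.log_mul (by linarith : (1:ℝ) - s ≠ 0) (by positivity : (1:ℝ) + s ≠ 0)
    rw [hmul] at this
    linarith [this]
  rw [hlog]
  have hlu : Real.log u ≠ 0 := (Real.log_neg hu0 hu1).ne
  set ℓ := Real.log u with hldef
  set m := Real.log (1 + s) with hmdef
  have huu : u = 1 - s ^ 2 := by linarith [hsq]
  rw [huu]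
  have hs0' : s ≠ 0 := hs0.ne'
  have hss : (1:ℝ) - (1 - s ^ 2) = s ^ 2 := by ring
  rw [hss]
  have hu0' : (1:ℝ) - s ^ 2 ≠ 0 := by rw [← huu]; exact hu0.ne'
  field_simp
  ring

lemma limitQ : Filter.Tendsto (fun u : ℝ => (15/32) *
      ((Real.log (1 + Real.sqrt (1-u)) * (2-u) / (Real.sqrt (1-u))^3 - 1/(1-u))
        * (Real.log u)⁻¹ - (2-u) / (2 * (Real.sqrt (1-u))^3)))
    (nhdsWithin 0 (Set.Ioo 0 1)) (nhds (-15/32)) := by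
  set l := nhdsWithin (0:ℝ) (Set.Ioo 0 1) with hldef
  have hid : Tendsto (fun u : ℝ => u) l (𝓝 0) :=
    tendsto_id.mono_left (nhdsWithin_le_nhds (s := Set.Ioo (0:ℝ) 1))
  have h2u : Tendsto (fun u : ℝ => 2 - u) l (𝓝 (2 - 0)) := tendsto_const_nhds.sub hid
  have h1mu : Tendsto (fun u : ℝ => 1 - u) l (𝓝 (1 - 0)) := tendsto_const_nhds.sub hid
  have hs : Tendsto (fun u : ℝ => Real.sqrt (1-u)) l (𝓝 (Real.sqrt (1 - 0))) :=
    (Real.continuous_sqrt.continuousAt.tendsto).comp h1mu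
  have hsval : Real.sqrt (1 - (0:ℝ)) = 1 := by
    rw [show (1:ℝ) - 0 = 1 by norm_num, Real.sqrt_one]
  have hs3 : Tendsto (fun u : ℝ => (Real.sqrt (1-u))^3) l (𝓝 ((Real.sqrt (1 - 0))^3)) :=
    hs.pow 3
  have hm : Tendsto (fun u : ℝ => Real.log (1 + Real.sqrt (1-u)))
      l (𝓝 (Real.log (1 + Real.sqrt (1 - 0)))) := by
    have h2 : Tendsto (fun u : ℝ => 1 + Real.sqrt (1-u)) l (𝓝 (1 + Real.sqrt (1 - 0))) :=
      tendsto_const_nhds.add hs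
    exact ((Real.continuousAt_log (by rw [hsval]; norm_num)).tendsto).comp h2
  have hloginv : Tendsto (fun u : ℝ => (Real.log u)⁻¹) l (𝓝 0) := by
    have h1 : Tendsto Real.log l atBot :=
      Real.tendsto_log_nhdsGT_zero.mono_left
        (nhdsWithin_mono 0 Set.Ioo_subset_Ioi_self)
    have h2 : Tendsto (fun u : ℝ => -Real.log u) l atTop := tendsto_neg_atBot_atTop.comp h1
    have h4 := h2.inv_tendsto_atTop.neg
    simp only [Pi.inv_apply] at h4
    convert h4 using 1
    · funext u; rw [inv_neg, neg_neg]
    · norm_num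
  have T1 : Tendsto (fun u : ℝ => Real.log (1 + Real.sqrt (1-u)) * (2-u) / (Real.sqrt (1-u))^3
      - 1/(1-u)) l (𝓝 (Real.log (1 + Real.sqrt (1-0)) * (2-0) / (Real.sqrt (1-0))^3
      - 1/(1-0))) :=
    ((hm.mul h2u).div hs3 (by rw [hsval]; norm_num)).sub
      (tendsto_const_nhds.div h1mu (by norm_num))
  have T3 : Tendsto (fun u : ℝ => (2-u) / (2 * (Real.sqrt (1-u))^3))
      l (𝓝 ((2-0) / (2 * (Real.sqrt (1-0))^3))) :=
    h2u.div (tendsto_const_nhds.mul hs3) (by rw [hsval]; norm_num)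
  have F := tendsto_const_nhds (x := (15/32:ℝ)) (f := l) |>.mul ((T1.mul hloginv).sub T3)
  convert F using 2
  rw [hsval]
  norm_num

/-- Logarithmic cusp at `-1`: `(f(-1+u) + 5/8)/(u² log u) → -15/32` as `u → 0⁺`. -/
theorem stmt_7 :
    Filter.Tendsto (fun u : ℝ => (stmt7f (-1 + u) + 5 / 8) / (u ^ 2 * Real.log u))
      (nhdsWithin 0 (Set.Ioo 0 1)) (nhds (-15 / 32)) := by
  have := limitQ
  refine tendsto_nhdsWithin_congr (fun u hu => ?_) this
  exact (pointwise_eq hu).symm
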